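/- Let G be a group with a left-order <. For g ∈ G define |g| to be the greater of g and g⁻¹. Let a, b, c, d be non-identity elements of G such that ab = ba, bc = cb, bd = db, (a³)⁻¹ c a³ = c⁻¹, (a³)⁻¹ d a³ = d⁻¹, and |a| < |b|. Then |c^d · c^{da} · c^{da²} · c^{da³} · c^{da⁴} · c^{da⁵}| < |b¹²|, where x^y denotes y⁻¹xy. -/

import Mathlib

section AuxStmt6

variable {G : Type*} [Group G] [LinearOrder G]
    [CovariantClass G G (· * ·) (· < ·)]

private lemma stmt6_mul_le_mul_left {x y : G} (h : x ≤ y) (z : G) : z * x ≤ z * y := by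
  rcases h.lt_or_eq with h | h
  · exact (mul_lt_mul_right h z).le
  · rw [h]

private lemma stmt6_mul_lt_pow {β x y : G} (hβx : Commute β x) {m n : ℕ}
    (h1 : x < β ^ m) (h2 : y < β ^ n) : x * y < β ^ (m + n) := by
  calc x * y < x * β ^ n := mul_lt_mul_right h2 x
    _ = β ^ n * x := ((hβx.pow_left n).eq).symm
    _ < β ^ n * β ^ m := mul_lt_mul_right h1 _
    _ = β ^ (m + n) := by rw [← pow_add, add_comm]

private lemma stmt6_core {β u w s : G} (hβu : Commute β u) (hβw : Commute β w)
    (hw : SemiconjBy w u u⁻¹) (hww : w * w = s)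
    (hs1 : s < β ^ 6) (hs2 : s⁻¹ < β ^ 6) : u < β ^ 2 := by
  by_contra hcon
  push_neg at hcon
  have c2 : Commute (β ^ 2) u := hβu.pow_left 2
  have h1 : β ^ 2 * β ^ 2 ≤ u * u := by
    calc β ^ 2 * β ^ 2 ≤ β ^ 2 * u := stmt6_mul_le_mul_left hcon _
      _ = u * β ^ 2 := c2.eq
      _ ≤ u * u := stmt6_mul_le_mul_left hcon u
  have hu3 : β ^ 6 ≤ u * u * u := by
    calc β ^ 6 = β ^ 2 * (β ^ 2 * β ^ 2) := by group
      _ ≤ β ^ 2 * (u * u) := stmt6_mul_le_mul_left h1 _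
      _ = u * u * β ^ 2 := (c2.mul_right c2).eq
      _ ≤ u * u * u := stmt6_mul_le_mul_left hcon (u * u)
  have hwinv : w⁻¹ < β ^ 3 := by
    by_contra h'
    push_neg at h'
    have c3 : Commute (β ^ 3) w⁻¹ := (hβw.inv_right).pow_left 3
    have hbig : β ^ 6 ≤ s⁻¹ := by
      calc β ^ 6 = β ^ 3 * β ^ 3 := by group
        _ ≤ β ^ 3 * w⁻¹ := stmt6_mul_le_mul_left h' _
        _ = w⁻¹ * β ^ 3 := c3.eq
        _ ≤ w⁻¹ * w⁻¹ := stmt6_mul_le_mul_left h' _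
        _ = s⁻¹ := by rw [← hww]; group
    exact absurd hs2 (not_lt.mpr hbig)
  have hw4 : (β ^ 3)⁻¹ < w := by
    have h1' : (1 : G) < w * β ^ 3 := by
      calc (1 : G) = w * w⁻¹ := by group
        _ < w * β ^ 3 := mul_lt_mul_right hwinv w
    calc (β ^ 3)⁻¹ = (β ^ 3)⁻¹ * 1 := (mul_one _).symm
      _ < (β ^ 3)⁻¹ * (w * β ^ 3) := mul_lt_mul_right h1' _
      _ = (β ^ 3)⁻¹ * (β ^ 3 * w) := by rw [← (hβw.pow_left 3).eq]
      _ = w := by group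
  have hw3' : w * (u * u * u) = u⁻¹ * u⁻¹ * u⁻¹ * w := by
    have h := (hw.pow_right 3).eq
    calc w * (u * u * u) = w * u ^ 3 := by simp [pow_succ, mul_assoc]
      _ = (u⁻¹) ^ 3 * w := h
      _ = u⁻¹ * u⁻¹ * u⁻¹ * w := by simp [pow_succ, mul_assoc]
  have hzz : (u * u * u * w) * (u * u * u * w) = s := by
    calc (u * u * u * w) * (u * u * u * w)
        = (u * u * u) * (w * (u * u * u)) * w := by group
      _ = (u * u * u) * (u⁻¹ * u⁻¹ * u⁻¹ * w) * w := by rw [hw3']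
      _ = w * w := by group
      _ = s := hww
  have cu : Commute (β ^ 3) u := hβu.pow_left 3
  have cuuu : Commute (β ^ 3) (u * u * u) := (cu.mul_right cu).mul_right cu
  have hcz : Commute (β ^ 3) (u * u * u * w) := cuuu.mul_right (hβw.pow_left 3)
  have hzgt : β ^ 3 < u * u * u * w := by
    calc β ^ 3 = (β ^ 3)⁻¹ * β ^ 6 := by group
      _ ≤ (β ^ 3)⁻¹ * (u * u * u) := stmt6_mul_le_mul_left hu3 _
      _ = (u * u * u) * (β ^ 3)⁻¹ := (cuuu.inv_left).eq
      _ < (u * u * u) * w := mul_lt_mul_right hw4 _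
  have hfin : β ^ 6 < s := by
    calc β ^ 6 = β ^ 3 * β ^ 3 := by group
      _ < β ^ 3 * (u * u * u * w) := mul_lt_mul_right hzgt _
      _ = (u * u * u * w) * β ^ 3 := hcz.eq
      _ < (u * u * u * w) * (u * u * u * w) := mul_lt_mul_right hzgt _
      _ = s := hzz
  exact lt_irrefl _ (hfin.trans hs1)

private lemma stmt6_aux_bound {β a c x : G}
    (hβa : Commute β a) (hβc : Commute β c) (hβx : Commute β x)
    (hsc : SemiconjBy (a ^ 3) c c⁻¹)
    (hx6 : Commute (a ^ 3 * a ^ 3) x)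
    (ha : a < β) (ha' : a⁻¹ < β) :
    x⁻¹ * c * x < β ^ 2 ∧ (x⁻¹ * c * x)⁻¹ < β ^ 2 := by
  have hβu : Commute β (x⁻¹ * c * x) := (hβx.inv_right.mul_right hβc).mul_right hβx
  have hβw : Commute β (x⁻¹ * a ^ 3 * x) :=
    (hβx.inv_right.mul_right (hβa.pow_right 3)).mul_right hβx
  have hwu : SemiconjBy (x⁻¹ * a ^ 3 * x) (x⁻¹ * c * x) (x⁻¹ * c * x)⁻¹ := by
    show (x⁻¹ * a ^ 3 * x) * (x⁻¹ * c * x) = (x⁻¹ * c * x)⁻¹ * (x⁻¹ * a ^ 3 * x)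
    calc (x⁻¹ * a ^ 3 * x) * (x⁻¹ * c * x) = x⁻¹ * (a ^ 3 * c) * x := by group
      _ = x⁻¹ * (c⁻¹ * a ^ 3) * x := by rw [hsc.eq]
      _ = (x⁻¹ * c * x)⁻¹ * (x⁻¹ * a ^ 3 * x) := by group
  have hww : (x⁻¹ * a ^ 3 * x) * (x⁻¹ * a ^ 3 * x) = a ^ 3 * a ^ 3 := by
    calc (x⁻¹ * a ^ 3 * x) * (x⁻¹ * a ^ 3 * x) = x⁻¹ * (a ^ 3 * a ^ 3 * x) := by group
      _ = x⁻¹ * (x * (a ^ 3 * a ^ 3)) := by rw [hx6.eq]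
      _ = a ^ 3 * a ^ 3 := by group
  have ha1 : a < β ^ 1 := by rwa [pow_one]
  have ha1' : a⁻¹ < β ^ 1 := by rwa [pow_one]
  have h2 : a * a < β ^ 2 := by
    have := stmt6_mul_lt_pow hβa ha1 ha1; simpa using this
  have h3 : a * a * a < β ^ 3 := by
    have := stmt6_mul_lt_pow (hβa.mul_right hβa) h2 ha1; simpa using this
  have h6 : (a * a * a) * (a * a * a) < β ^ 6 := by
    have := stmt6_mul_lt_pow ((hβa.mul_right hβa).mul_right hβa) h3 h3
    simpa using this
  have h2' : a⁻¹ * a⁻¹ < β ^ 2 := by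
    have := stmt6_mul_lt_pow hβa.inv_right ha1' ha1'; simpa using this
  have h3' : a⁻¹ * a⁻¹ * a⁻¹ < β ^ 3 := by
    have := stmt6_mul_lt_pow (hβa.inv_right.mul_right hβa.inv_right) h2' ha1'
    simpa using this
  have h6' : (a⁻¹ * a⁻¹ * a⁻¹) * (a⁻¹ * a⁻¹ * a⁻¹) < β ^ 6 := by
    have := stmt6_mul_lt_pow
      ((hβa.inv_right.mul_right hβa.inv_right).mul_right hβa.inv_right) h3' h3'
    simpa using this
  have hs1 : a ^ 3 * a ^ 3 < β ^ 6 := by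
    have heq : a ^ 3 * a ^ 3 = (a * a * a) * (a * a * a) := by simp [pow_succ, mul_assoc]
    rw [heq]; exact h6
  have hs2 : (a ^ 3 * a ^ 3)⁻¹ < β ^ 6 := by
    have heq : (a ^ 3 * a ^ 3)⁻¹ = (a⁻¹ * a⁻¹ * a⁻¹) * (a⁻¹ * a⁻¹ * a⁻¹) := by simp [pow_succ, mul_assoc, mul_inv_rev]
    rw [heq]; exact h6'
  refine ⟨stmt6_core hβu hβw hwu hww hs1 hs2, ?_⟩
  exact stmt6_core hβu.inv_right hβw hwu.inv_right hww hs1 hs2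

private lemma stmt6_fold6 {β x0 x1 x2 x3 x4 x5 : G}
    (h0 : Commute β x0) (h1 : Commute β x1) (h2 : Commute β x2)
    (h3 : Commute β x3) (h4 : Commute β x4)
    (b0 : x0 < β ^ 2) (b1 : x1 < β ^ 2) (b2 : x2 < β ^ 2)
    (b3 : x3 < β ^ 2) (b4 : x4 < β ^ 2) (b5 : x5 < β ^ 2) :
    x0 * x1 * x2 * x3 * x4 * x5 < β ^ 12 := by
  have t01 : x0 * x1 < β ^ 4 := by
    have := stmt6_mul_lt_pow h0 b0 b1; simpa using this
  have t02 : x0 * x1 * x2 < β ^ 6 := by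
    have := stmt6_mul_lt_pow (h0.mul_right h1) t01 b2; simpa using this
  have t03 : x0 * x1 * x2 * x3 < β ^ 8 := by
    have := stmt6_mul_lt_pow ((h0.mul_right h1).mul_right h2) t02 b3
    simpa using this
  have t04 : x0 * x1 * x2 * x3 * x4 < β ^ 10 := by
    have := stmt6_mul_lt_pow (((h0.mul_right h1).mul_right h2).mul_right h3) t03 b4
    simpa using this
  have := stmt6_mul_lt_pow
    ((((h0.mul_right h1).mul_right h2).mul_right h3).mul_right h4) t04 b5
  simpa using this

end AuxStmt6

theorem stmt_6 {G : Type*} [Group G] [LinearOrder G]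
    [CovariantClass G G (· * ·) (· < ·)]
    (a b c d : G) (ha : a ≠ 1) (hb : b ≠ 1) (hc : c ≠ 1) (hd : d ≠ 1)
    (hab : a * b = b * a) (hbc : b * c = c * b) (hbd : b * d = d * b)
    (hca : (a ^ 3)⁻¹ * c * a ^ 3 = c⁻¹) (hda : (a ^ 3)⁻¹ * d * a ^ 3 = d⁻¹)
    (hlt : max a a⁻¹ < max b b⁻¹) :
    let E := (d⁻¹ * c * d) * ((d * a)⁻¹ * c * (d * a)) *
      ((d * a ^ 2)⁻¹ * c * (d * a ^ 2)) * ((d * a ^ 3)⁻¹ * c * (d * a ^ 3)) *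
      ((d * a ^ 4)⁻¹ * c * (d * a ^ 4)) * ((d * a ^ 5)⁻¹ * c * (d * a ^ 5))
    max E E⁻¹ < max (b ^ 12) (b ^ 12)⁻¹ := by
  intro E
  have hE : E = (d⁻¹ * c * d) * ((d * a)⁻¹ * c * (d * a)) *
      ((d * a ^ 2)⁻¹ * c * (d * a ^ 2)) * ((d * a ^ 3)⁻¹ * c * (d * a ^ 3)) *
      ((d * a ^ 4)⁻¹ * c * (d * a ^ 4)) * ((d * a ^ 5)⁻¹ * c * (d * a ^ 5)) := rfl
  -- commuting with β := max b b⁻¹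
  have hmc : ∀ x : G, b * x = x * b → Commute (max b b⁻¹) x := by
    intro x hx
    rcases max_choice b b⁻¹ with h | h <;> rw [h]
    · exact hx
    · exact (show Commute b x from hx).inv_left
  have hβa : Commute (max b b⁻¹) a := hmc a hab.symm
  have hβc : Commute (max b b⁻¹) c := hmc c hbc
  have hβd : Commute (max b b⁻¹) d := hmc d hbd
  have haβ : a < max b b⁻¹ := lt_of_le_of_lt (le_max_left a a⁻¹) hlt
  have haβ' : a⁻¹ < max b b⁻¹ := lt_of_le_of_lt (le_max_right a a⁻¹) hlt
  -- semiconjugation facts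
  have hca2 : SemiconjBy (a ^ 3) c c⁻¹ := by
    show a ^ 3 * c = c⁻¹ * a ^ 3
    have h0 : ((a ^ 3)⁻¹ * c * a ^ 3) * ((a ^ 3)⁻¹ * c⁻¹ * a ^ 3) = 1 := by group
    rw [hca] at h0
    have h1 : (a ^ 3)⁻¹ * c⁻¹ * a ^ 3 = c := (inv_mul_eq_one.mp h0).symm
    calc a ^ 3 * c = a ^ 3 * ((a ^ 3)⁻¹ * c⁻¹ * a ^ 3) := by rw [h1]
      _ = c⁻¹ * a ^ 3 := by group
  have hda2 : a ^ 3 * d = d⁻¹ * a ^ 3 := by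
    have h0 : ((a ^ 3)⁻¹ * d * a ^ 3) * ((a ^ 3)⁻¹ * d⁻¹ * a ^ 3) = 1 := by group
    rw [hda] at h0
    have h1 : (a ^ 3)⁻¹ * d⁻¹ * a ^ 3 = d := (inv_mul_eq_one.mp h0).symm
    calc a ^ 3 * d = a ^ 3 * ((a ^ 3)⁻¹ * d⁻¹ * a ^ 3) := by rw [h1]
      _ = d⁻¹ * a ^ 3 := by group
  have hda3 : a ^ 3 * d⁻¹ = d * a ^ 3 := by
    calc a ^ 3 * d⁻¹ = a ^ 3 * ((a ^ 3)⁻¹ * d * a ^ 3) := by rw [hda]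
      _ = d * a ^ 3 := by group
  have hd6 : Commute (a ^ 3 * a ^ 3) d := by
    show a ^ 3 * a ^ 3 * d = d * (a ^ 3 * a ^ 3)
    calc a ^ 3 * a ^ 3 * d = a ^ 3 * (a ^ 3 * d) := by group
      _ = a ^ 3 * (d⁻¹ * a ^ 3) := by rw [hda2]
      _ = (a ^ 3 * d⁻¹) * a ^ 3 := by group
      _ = (d * a ^ 3) * a ^ 3 := by rw [hda3]
      _ = d * (a ^ 3 * a ^ 3) := by group
  have caa : ∀ k : ℕ, Commute (a ^ 3 * a ^ 3) (a ^ k) := fun k =>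
    ((Commute.refl a).pow_pow 3 k).mul_left ((Commute.refl a).pow_pow 3 k)
  have caa1 : Commute (a ^ 3 * a ^ 3) a :=
    ((Commute.refl a).pow_left 3).mul_left ((Commute.refl a).pow_left 3)
  -- the six bounds
  have B0 := stmt6_aux_bound hβa hβc hβd hca2 hd6 haβ haβ'
  have B1 := stmt6_aux_bound hβa hβc (hβd.mul_right hβa) hca2
    (hd6.mul_right caa1) haβ haβ'
  have B2 := stmt6_aux_bound hβa hβc (hβd.mul_right (hβa.pow_right 2)) hca2
    (hd6.mul_right (caa 2)) haβ haβ'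
  have B3 := stmt6_aux_bound hβa hβc (hβd.mul_right (hβa.pow_right 3)) hca2
    (hd6.mul_right (caa 3)) haβ haβ'
  have B4 := stmt6_aux_bound hβa hβc (hβd.mul_right (hβa.pow_right 4)) hca2
    (hd6.mul_right (caa 4)) haβ haβ'
  have B5 := stmt6_aux_bound hβa hβc (hβd.mul_right (hβa.pow_right 5)) hca2
    (hd6.mul_right (caa 5)) haβ haβ'
  -- commuting of the six factors with β
  have hβu : ∀ x : G, Commute (max b b⁻¹) x → Commute (max b b⁻¹) (x⁻¹ * c * x) :=
    fun x hx => (hx.inv_right.mul_right hβc).mul_right hx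
  have hβx0 := hβd
  have hβx1 := hβd.mul_right hβa
  have hβx2 := hβd.mul_right (hβa.pow_right 2)
  have hβx3 := hβd.mul_right (hβa.pow_right 3)
  have hβx4 := hβd.mul_right (hβa.pow_right 4)
  have hβx5 := hβd.mul_right (hβa.pow_right 5)
  have hE1 : E < (max b b⁻¹) ^ 12 := by
    rw [hE]
    exact stmt6_fold6 (hβu d hβx0) (hβu (d * a) hβx1) (hβu (d * a ^ 2) hβx2)
      (hβu (d * a ^ 3) hβx3) (hβu (d * a ^ 4) hβx4)
      B0.1 B1.1 B2.1 B3.1 B4.1 B5.1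
  have hE2 : E⁻¹ < (max b b⁻¹) ^ 12 := by
    rw [hE]
    have heq : ((d⁻¹ * c * d) * ((d * a)⁻¹ * c * (d * a)) *
        ((d * a ^ 2)⁻¹ * c * (d * a ^ 2)) * ((d * a ^ 3)⁻¹ * c * (d * a ^ 3)) *
        ((d * a ^ 4)⁻¹ * c * (d * a ^ 4)) * ((d * a ^ 5)⁻¹ * c * (d * a ^ 5)))⁻¹
        = ((d * a ^ 5)⁻¹ * c * (d * a ^ 5))⁻¹ * ((d * a ^ 4)⁻¹ * c * (d * a ^ 4))⁻¹ *
          ((d * a ^ 3)⁻¹ * c * (d * a ^ 3))⁻¹ * ((d * a ^ 2)⁻¹ * c * (d * a ^ 2))⁻¹ *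
          ((d * a)⁻¹ * c * (d * a))⁻¹ * (d⁻¹ * c * d)⁻¹ := by group
    rw [heq]
    exact stmt6_fold6 ((hβu (d * a ^ 5) hβx5).inv_right)
      ((hβu (d * a ^ 4) hβx4).inv_right) ((hβu (d * a ^ 3) hβx3).inv_right)
      ((hβu (d * a ^ 2) hβx2).inv_right) ((hβu (d * a) hβx1).inv_right)
      B5.2 B4.2 B3.2 B2.2 B1.2 B0.2
  have hfin : (max b b⁻¹) ^ 12 ≤ max (b ^ 12) (b ^ 12)⁻¹ := by
    rcases max_choice b b⁻¹ with h | h <;> rw [h]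
    · exact le_max_left _ _
    · rw [inv_pow]; exact le_max_right _ _
  exact max_lt (hE1.trans_le hfin) (hE2.trans_le hfin)
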